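/- arXiv:1812.06231 — 3 statements merged into one kernel-verified Lean document; each statement's English description precedes it below -/
import Mathlib

section
/- Let q be a prime power and let ℓ be an odd prime dividing q - 1. Then for every nonnegative integer t, v_ℓ(N_q(2^t · ℓ)) = v_ℓ(q - 1) - 1, where N_q(n) denotes the number of monic irreducible polynomials of degree n in F_q[x]. -/
open Polynomial
open scoped Classical

/-- The discriminant of a polynomial `f` of degree `m ≥ 2` over a field `F`, computed in an
algebraic closure via the standard formula
`disc(f) = (-1)^(m(m-1)/2) · a_m^(m-2) · ∏_i f'(α_i)`, where `a_m` is the leading coefficient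
and the `α_i` are the roots of `f` (with multiplicity) in the algebraic closure; this equals
`a_m^(2m-2) · ∏_{i<j} (α_i - α_j)^2`.  For `f` of degree at most 1 it is defined to be `1`. -/
noncomputable def polyDisc {F : Type*} [Field F] (f : F[X]) : AlgebraicClosure F :=
  if f.natDegree ≤ 1 then 1
  else
    (-1) ^ (f.natDegree * (f.natDegree - 1) / 2) *
      algebraMap F (AlgebraicClosure F) f.leadingCoeff ^ (f.natDegree - 2) *
      (Multiset.map (fun a => ((derivative f).map (algebraMap F (AlgebraicClosure F))).eval a)
        (f.map (algebraMap F (AlgebraicClosure F))).roots).prod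

/-- The Möbius function on polynomials over a field: `μ f = (-1)^k` if `f` is squarefree
with `k` (distinct) monic irreducible factors, and `μ f = 0` otherwise. -/
noncomputable def polyMu {F : Type*} [Field F] (f : F[X]) : ℤ :=
  if Squarefree f then (-1) ^ {π : F[X] | π.Monic ∧ Irreducible π ∧ π ∣ f}.ncard else 0

/-- `f` has factorization type `λ` (a partition of `m`): `f` is a product of distinct monic
irreducible polynomials whose degrees form the multiset of parts of `λ`.  The set
`S_{λ,F}` of monic squarefree polynomials of factorization type `λ` is
`{f | hasFactorizationType f λ}`. -/
def hasFactorizationType {F : Type*} [Field F] (f : F[X]) {m : ℕ} (lam : m.Partition) : Prop :=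
  ∃ s : Finset F[X], (∀ π ∈ s, π.Monic ∧ Irreducible π) ∧ (∏ π ∈ s, π) = f ∧
    Multiset.map natDegree s.val = lam.parts

section GaussCount

variable {F : Type*} [Field F] [Fintype F]


theorem my_card_splittingField {m : ℕ} (hm : m ≠ 0) :
    Nat.card (X ^ Fintype.card F ^ m - X : F[X]).SplittingField = Fintype.card F ^ m := by
  haveI : Fintype (X ^ Fintype.card F ^ m - X : F[X]).SplittingField := Fintype.ofFinite _
  set g : F[X] := X ^ Fintype.card F ^ m - X with hg
  set E := g.SplittingField
  obtain ⟨p, hpc⟩ := CharP.exists F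
  haveI : CharP F p := hpc
  obtain ⟨k, hp, hqk⟩ := FiniteField.card F p
  haveI hpp : Fact p.Prime := ⟨hp⟩
  haveI : CharP E p := (Algebra.charP_iff F E p).mp hpc
  have hq1 : 1 < Fintype.card F := Fintype.one_lt_card
  have hqm1 : 1 < Fintype.card F ^ m := one_lt_pow₀ hq1 hm
  have hpq : p ∣ Fintype.card F := by rw [hqk]; exact dvd_pow_self p k.2.ne'
  have hsep : g.Separable := galois_poly_separable p (Fintype.card F ^ m) (hpq.trans (dvd_pow_self _ hm))
  have hgne : g ≠ 0 := FiniteField.X_pow_card_sub_X_ne_zero F hqm1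
  have key : Fintype.card (g.rootSet E) = g.natDegree :=
    card_rootSet_eq_natDegree hsep (SplittingField.splits g)
  have hdeg : g.natDegree = Fintype.card F ^ m := FiniteField.X_pow_card_sub_X_natDegree_eq F hqm1
  have huniv : g.rootSet E = Set.univ := by
    rw [Set.eq_univ_iff_forall]
    intro x
    -- every element satisfies x ^ Fintype.card F ^ m = x
    have hfrob : Fintype.card F ^ m = p ^ (k * m) := by rw [hqk, ← pow_mul]
    set R : Subring E := RingHom.eqLocus (iterateFrobenius E p (k * m)) (RingHom.id E) with hR
    have hmem : ∀ y : E, y ∈ R ↔ y ^ Fintype.card F ^ m = y := by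
      intro y
      show iterateFrobenius E p (k * m) y = y ↔ _
      rw [iterateFrobenius_def, hfrob]
    have hxR : x ∈ R := by
      have hx : x ∈ Algebra.adjoin F (g.rootSet E) := by
        rw [SplittingField.adjoin_rootSet]; trivial
      rw [Algebra.mem_adjoin_iff] at hx
      refine Subring.closure_le.mpr ?_ hx
      rintro y (⟨r, rfl⟩ | hy)
      · rw [SetLike.mem_coe, hmem, ← map_pow]
        congr 1
        exact FiniteField.pow_card_pow m r
      · rw [SetLike.mem_coe, hmem]
        have := hy
        rw [mem_rootSet_of_ne hgne] at this
        have h2 : aeval y g = y ^ Fintype.card F ^ m - y := by simp [hg]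
        rw [h2] at this
        exact sub_eq_zero.mp this
    rw [mem_rootSet_of_ne hgne]
    have hx : x ^ Fintype.card F ^ m = x := (hmem x).mp hxR
    simp [hg, hx]
  rw [hdeg] at key
  rw [← key, Nat.card_eq_fintype_card]
  exact (Fintype.card_congr ((Equiv.setCongr huniv).trans (Equiv.Set.univ E))).symm

variable {F : Type*} [Field F] [Fintype F]

theorem my_gauss (m : ℕ) (hm : m ≠ 0) :
    ∑ d ∈ m.divisors,
        d * ({f : F[X] | f.Monic ∧ Irreducible f ∧ f.natDegree = d}.ncard)
      = Fintype.card F ^ m := by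
  set q := Fintype.card F with hq
  have hq1 : 1 < q := Fintype.one_lt_card
  set g : F[X] := X ^ q ^ m - X with hg
  set E := g.SplittingField with hE
  haveI : Fintype E := Fintype.ofFinite _
  have hcardE : Fintype.card E = q ^ m := by
    have := my_card_splittingField (F := F) hm
    rwa [Nat.card_eq_fintype_card] at this
  have hqm1 : 1 < q ^ m := one_lt_pow₀ hq1 hm
  have hgne : g ≠ 0 := FiniteField.X_pow_card_sub_X_ne_zero F hqm1
  obtain ⟨p, hpc⟩ := CharP.exists F
  haveI : CharP F p := hpc
  obtain ⟨k, hp, hqk⟩ := FiniteField.card F p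
  haveI hpp : Fact p.Prime := ⟨hp⟩
  have hpq : p ∣ q := by rw [hq, hqk]; exact dvd_pow_self p k.2.ne'
  have hsep : g.Separable := galois_poly_separable p (q ^ m) (hpq.trans (dvd_pow_self _ hm))
  haveI : FiniteDimensional F E := by infer_instance
  haveI : Algebra.IsIntegral F E := Algebra.IsIntegral.of_finite F E
  -- every P monic irreducible with degree dividing m divides g
  have hPdvdg : ∀ P : F[X], P.Monic → Irreducible P → P.natDegree ∣ m → P ∣ g := by
    intro P hPm hPirr hPd
    have hP0 : P ≠ 0 := hPm.ne_zero
    haveI : Fact (Irreducible P) := ⟨hPirr⟩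
    set K := AdjoinRoot P with hK
    haveI : FiniteDimensional F K := PowerBasis.finite (AdjoinRoot.powerBasis hP0)
    haveI : Finite K := Module.finite_of_finite F
    haveI : Fintype K := Fintype.ofFinite _
    have hcardK : Fintype.card K = q ^ P.natDegree := by
      rw [Module.card_fintype (AdjoinRoot.powerBasis hP0).basis, ← hq,
        AdjoinRoot.powerBasis_dim hP0]
      simp
    have hroot : (AdjoinRoot.root P) ^ q ^ P.natDegree = AdjoinRoot.root P := by
      rw [← hcardK]; exact FiniteField.pow_card _
    have hmin : minpoly F (AdjoinRoot.root P) = P := by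
      rw [AdjoinRoot.minpoly_root hP0, hPm.leadingCoeff, inv_one, map_one, mul_one]
    have haev : aeval (AdjoinRoot.root P) (X ^ q ^ P.natDegree - X : F[X]) = 0 := by
      simp [hroot]
    have hdvd1 : P ∣ (X ^ q ^ P.natDegree - X : F[X]) := by
      conv_lhs => rw [← hmin]
      exact minpoly.dvd F _ haev
    refine hdvd1.trans ?_
    -- X^(q^d) - X ∣ X^(q^m) - X when d ∣ m
    have hqd1 : 1 ≤ q ^ P.natDegree := Nat.one_le_pow _ _ (by omega)
    have hqm1' : 1 ≤ q ^ m := Nat.one_le_pow _ _ (by omega)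
    have hdvdnat : q ^ P.natDegree - 1 ∣ q ^ m - 1 := by
      obtain ⟨c, rfl⟩ := hPd
      rw [pow_mul]
      simpa using Nat.sub_dvd_pow_sub_pow (q ^ P.natDegree) 1 c
    have key : (X ^ (q ^ P.natDegree - 1) - 1 : F[X]) ∣ (X ^ (q ^ m - 1) - 1 : F[X]) := by
      obtain ⟨c, hc⟩ := hdvdnat
      rw [hc, pow_mul]
      simpa using sub_dvd_pow_sub_pow ((X : F[X]) ^ (q ^ P.natDegree - 1)) 1 c
    have factor : ∀ a : ℕ, 1 ≤ a → (X ^ a - X : F[X]) = X * (X ^ (a - 1) - 1) := by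
      intro a ha
      rw [mul_sub, mul_one, ← pow_succ']
      congr 2
      omega
    rw [hg, factor _ hqm1', factor _ hqd1] at *
    exact mul_dvd_mul_left _ key
  -- fiber cardinalities
  have hfiber : ∀ P : F[X], P.Monic → Irreducible P → P.natDegree ∣ m →
      (Finset.univ.filter (fun x : E => minpoly F x = P)).card = P.natDegree := by
    intro P hPm hPirr hPd
    have hP0 : P ≠ 0 := hPm.ne_zero
    have hPg : P ∣ g := hPdvdg P hPm hPirr hPd
    have hPsep : P.Separable := hsep.of_dvd hPg
    have hPsplit : Splits (P.map (algebraMap F E)) :=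
      (SplittingField.splits g).of_dvd (Polynomial.map_ne_zero hgne) (Polynomial.map_dvd _ hPg)
    have hcard : Fintype.card (P.rootSet E) = P.natDegree :=
      card_rootSet_eq_natDegree hPsep hPsplit
    rw [← hcard]
    rw [← Fintype.card_subtype]
    apply Fintype.card_congr
    apply Equiv.subtypeEquivRight
    intro x
    rw [mem_rootSet_of_ne hP0]
    constructor
    · rintro rfl; exact minpoly.aeval F x
    · intro hx
      exact (minpoly.eq_of_irreducible_of_monic hPirr hx hPm).symm
  -- properties of minpoly
  have hmono : ∀ x : E, (minpoly F x).Monic := fun x =>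
    minpoly.monic (Algebra.IsIntegral.isIntegral x)
  have hirr : ∀ x : E, Irreducible (minpoly F x) := fun x =>
    minpoly.irreducible (Algebra.IsIntegral.isIntegral x)
  have hfinrank : Module.finrank F E = m := by
    have h1 : Fintype.card E = q ^ Module.finrank F E := by
      rw [hq]
      exact Module.card_eq_pow_finrank
    rw [hcardE] at h1
    exact (Nat.pow_right_injective hq1 h1.symm)
  have hdegdvd : ∀ x : E, (minpoly F x).natDegree ∣ m := by
    intro x
    have hint := Algebra.IsIntegral.isIntegral (R := F) x
    have h1 : Module.finrank F (IntermediateField.adjoin F {x}) = (minpoly F x).natDegree :=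
      IntermediateField.adjoin.finrank hint
    refine ⟨Module.finrank (IntermediateField.adjoin F {x}) E, ?_⟩
    rw [← h1, ← hfinrank]
    exact (Module.finrank_mul_finrank F (IntermediateField.adjoin F {x}) E).symm
  -- the image of the minpoly map
  set T : Finset F[X] := Finset.univ.image (fun x : E => minpoly F x) with hT
  have hTmem : ∀ P ∈ T, P.Monic ∧ Irreducible P ∧ P.natDegree ∣ m := by
    intro P hP
    rw [hT, Finset.mem_image] at hP
    obtain ⟨x, _, rfl⟩ := hP
    exact ⟨hmono x, hirr x, hdegdvd x⟩
  have hTmem' : ∀ P : F[X], P.Monic → Irreducible P → P.natDegree ∣ m → P ∈ T := by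
    intro P hPm hPirr hPd
    have h1 := hfiber P hPm hPirr hPd
    have hdpos : 0 < P.natDegree := hPirr.natDegree_pos
    have : (Finset.univ.filter (fun x : E => minpoly F x = P)).Nonempty := by
      rw [← Finset.card_pos, h1]; exact hdpos
    obtain ⟨x, hx⟩ := this
    rw [Finset.mem_filter] at hx
    rw [hT, Finset.mem_image]
    exact ⟨x, Finset.mem_univ x, hx.2⟩
  -- first count
  have count1 : Fintype.card E = ∑ P ∈ T, P.natDegree := by
    rw [← Finset.card_univ,
      Finset.card_eq_sum_card_fiberwise (f := fun x : E => minpoly F x) (t := T)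
        (fun x _ => Finset.mem_image_of_mem _ (Finset.mem_univ x))]
    apply Finset.sum_congr rfl
    intro P hP
    obtain ⟨hPm, hPirr, hPd⟩ := hTmem P hP
    exact hfiber P hPm hPirr hPd
  -- reindex by degree
  have count2 : ∑ P ∈ T, P.natDegree
      = ∑ d ∈ m.divisors, ∑ P ∈ T.filter (fun P => P.natDegree = d), P.natDegree := by
    refine (Finset.sum_fiberwise_of_maps_to ?_ _).symm
    intro P hP
    obtain ⟨hPm, hPirr, hPd⟩ := hTmem P hP
    exact Nat.mem_divisors.mpr ⟨hPd, hm⟩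
  -- identify the fibers with the sets in the statement
  have hsets : ∀ d ∈ m.divisors,
      {f : F[X] | f.Monic ∧ Irreducible f ∧ f.natDegree = d}
        = ↑(T.filter (fun P => P.natDegree = d)) := by
    intro d hd
    rw [Nat.mem_divisors] at hd
    ext f
    simp only [Set.mem_setOf_eq, Finset.coe_filter, Finset.mem_coe, Set.mem_setOf_eq,
      Finset.mem_filter]
    constructor
    · rintro ⟨h1, h2, h3⟩
      exact ⟨hTmem' f h1 h2 (h3 ▸ hd.1), h3⟩
    · rintro ⟨hfT, h3⟩
      obtain ⟨h1, h2, _⟩ := hTmem f hfT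
      exact ⟨h1, h2, h3⟩
  rw [← hcardE, count1, count2]
  apply Finset.sum_congr rfl
  intro d hd
  rw [hsets d hd, Set.ncard_coe_finset]
  rw [Finset.sum_congr rfl (fun P hP => (Finset.mem_filter.mp hP).2)]
  rw [Finset.sum_const, smul_eq_mul, mul_comm]

end GaussCount

theorem my_dvd_mul_prime_prime {a b x : ℕ} (ha : a.Prime) (hb : b.Prime) (hx : x ∣ a * b) :
    x = 1 ∨ x = a ∨ x = b ∨ x = a * b := by
  by_cases h : a ∣ x
  · obtain ⟨y, rfl⟩ := h
    have hy : y ∣ b := (Nat.mul_dvd_mul_iff_left ha.pos).mp hx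
    rcases (Nat.Prime.eq_one_or_self_of_dvd hb y hy) with rfl | rfl
    · right; left; exact mul_one a
    · right; right; right; rfl
  · have hco : Nat.Coprime x a := ((Nat.Prime.coprime_iff_not_dvd ha).mpr h).symm
    have hxb : x ∣ b := hco.dvd_of_dvd_mul_left hx
    rcases (Nat.Prime.eq_one_or_self_of_dvd hb x hxb) with rfl | rfl
    · left; rfl
    · right; right; left; rfl

theorem my_sqfree_dvd {l t x : ℕ} (hl : l.Prime) (hx : Squarefree x) (hd : x ∣ 2 ^ t * l) :
    x ∣ 2 * l := by
  conv_lhs => rw [← Nat.prod_primeFactors_of_squarefree hx]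
  apply Finset.prod_primes_dvd
  · intro p hp; exact (Nat.prime_of_mem_primeFactors hp).prime
  · intro p hp
    have hpp := Nat.prime_of_mem_primeFactors hp
    have hpd : p ∣ 2 ^ t * l := (Nat.dvd_of_mem_primeFactors hp).trans hd
    rcases (Nat.Prime.dvd_mul hpp).mp hpd with h | h
    · exact Dvd.dvd.mul_right (hpp.dvd_of_dvd_pow h) l
    · exact Dvd.dvd.mul_left h 2

open ArithmeticFunction ArithmeticFunction.Moebius in
theorem my_inv {F : Type*} [Field F] [Fintype F] (n : ℕ) (hn : 0 < n) :
    (n : ℤ) * ({f : F[X] | f.Monic ∧ Irreducible f ∧ f.natDegree = n}.ncard : ℤ)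
      = ∑ d ∈ n.divisors, (μ d : ℤ) * (Fintype.card F : ℤ) ^ (n / d) := by
  have h := (sum_eq_iff_sum_mul_moebius_eq (R := ℤ)
    (f := fun d => (d : ℤ) * ({f : F[X] | f.Monic ∧ Irreducible f ∧ f.natDegree = d}.ncard : ℤ))
    (g := fun n => (Fintype.card F : ℤ) ^ n)).mp ?_ n hn
  · rw [← h, ← Nat.sum_divisorsAntidiagonal (fun d e => ((μ d : ℤ) * (Fintype.card F : ℤ) ^ e))]
    exact Finset.sum_congr rfl fun x _ => by push_cast; ring
  · intro n hn
    have hg := my_gauss (F := F) n hn.ne'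
    exact_mod_cast congrArg (Nat.cast : ℕ → ℤ) hg

theorem my_val_pow_sub_one {l q s : ℕ} [Fact l.Prime] (hlodd : Odd l) (hq : 1 < q)
    (hdvd : l ∣ q - 1) (hlq : ¬ l ∣ q) (hs : s ≠ 0) (hls : ¬ l ∣ s) :
    padicValNat l (q ^ s - 1) = padicValNat l (q - 1) := by
  have h := padicValNat.pow_sub_pow (p := l) hlodd (x := q) (y := 1) hq (by simpa using hdvd)
    hlq hs
  simpa [padicValNat.eq_zero_of_not_dvd hls] using h

theorem stmt17' {F : Type*} [Field F] [Fintype F] (l : ℕ)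
    (hl : l.Prime) (hlodd : Odd l) (hdvd : l ∣ Fintype.card F - 1) (t : ℕ) :
    padicValNat l
        ({f : F[X] | f.Monic ∧ Irreducible f ∧ f.natDegree = 2 ^ t * l}.ncard) =
      padicValNat l (Fintype.card F - 1) - 1 := by
  set q := Fintype.card F with hqdef
  haveI : Fact l.Prime := ⟨hl⟩
  have hq2 : 2 ≤ q := Fintype.one_lt_card
  have hlo := Nat.odd_iff.mp hlodd
  have hl2 := hl.two_le
  have hl3 : 3 ≤ l := by omega
  have hlpos : 0 < l := by omega
  have hlq : ¬ l ∣ q := by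
    intro h
    have h1 : l ∣ q - (q - 1) := Nat.dvd_sub h hdvd
    rw [Nat.sub_sub_self (by omega)] at h1
    have := Nat.le_of_dvd one_pos h1
    omega
  have hlm1 : ¬ l ∣ (l - 1) := by
    intro h
    have := Nat.le_of_dvd (by omega) h
    omega
  have hv1 : 1 ≤ padicValNat l (q - 1) := one_le_padicValNat_of_dvd (by omega) hdvd
  have hinv := my_inv (F := F) (2 ^ t * l) (by positivity)
  cases t with
  | zero =>
    simp only [pow_zero, one_mul] at hinv ⊢
    set N := ({f : F[X] | f.Monic ∧ Irreducible f ∧ f.natDegree = l}.ncard) with hN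
    rw [Nat.Prime.divisors hl, Finset.sum_insert (by simp; omega), Finset.sum_singleton,
      ArithmeticFunction.moebius_apply_one, ArithmeticFunction.moebius_apply_prime hl,
      Nat.div_one, Nat.div_self hlpos] at hinv
    have hq1l : 2 ≤ q ^ (l - 1) := Nat.one_lt_pow (by omega) hq2
    have hnat : l * N = q * (q ^ (l - 1) - 1) := by
      have e : (q : ℤ) ^ l = q * q ^ (l - 1) := by rw [← pow_succ']; congr 1; omega
      zify [show 1 ≤ q ^ (l - 1) by omega]
      rw [mul_sub, mul_one, ← e]
      push_cast at hinv
      linarith [hinv]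
    have hNne : N ≠ 0 := by
      intro h0
      rw [h0, mul_zero] at hnat
      have : 0 < q * (q ^ (l - 1) - 1) := Nat.mul_pos (by omega) (by omega)
      omega
    have hval : padicValNat l (l * N) = padicValNat l (q * (q ^ (l - 1) - 1)) := by rw [hnat]
    rw [padicValNat.mul (by omega) hNne, padicValNat.mul (by omega) (by omega),
      padicValNat_self, padicValNat.eq_zero_of_not_dvd hlq,
      my_val_pow_sub_one hlodd (by omega) hdvd hlq (by omega) hlm1] at hval
    omega
  | succ s =>
    set A := q ^ 2 ^ s with hA
    have h2s : (0:ℕ) < 2 ^ s := by positivity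
    have hA2 : 2 ≤ A := by
      calc (2:ℕ) = 2 ^ 1 := rfl
      _ ≤ 2 ^ 2 ^ s := Nat.pow_le_pow_right (by omega) (by omega)
      _ ≤ A := Nat.pow_le_pow_left hq2 _
    set N := ({f : F[X] | f.Monic ∧ Irreducible f ∧ f.natDegree = 2 ^ (s + 1) * l}.ncard)
      with hN
    have hn₀ : (0:ℕ) < 2 ^ (s + 1) * l := by positivity
    have hDsub : ({1, 2, l, 2 * l} : Finset ℕ) ⊆ (2 ^ (s + 1) * l).divisors := by
      intro d hd
      simp only [Finset.mem_insert, Finset.mem_singleton] at hd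
      rw [Nat.mem_divisors]
      have h2dvd : (2:ℕ) ∣ 2 ^ (s + 1) := dvd_pow_self 2 (Nat.succ_ne_zero s)
      rcases hd with rfl | rfl | rfl | rfl
      · exact ⟨one_dvd _, by omega⟩
      · exact ⟨dvd_mul_of_dvd_left h2dvd _, by omega⟩
      · exact ⟨dvd_mul_left _ _, by omega⟩
      · exact ⟨mul_dvd_mul h2dvd dvd_rfl, by omega⟩
    have hzero : ∀ d ∈ (2 ^ (s + 1) * l).divisors, d ∉ ({1, 2, l, 2 * l} : Finset ℕ) →
        (ArithmeticFunction.moebius d : ℤ) * (q : ℤ) ^ (2 ^ (s + 1) * l / d) = 0 := by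
      intro d hdmem hdnot
      rcases Classical.em (Squarefree d) with hsq | hsq
      · exfalso
        have hd2l := my_sqfree_dvd hl hsq (Nat.mem_divisors.mp hdmem).1
        rcases my_dvd_mul_prime_prime Nat.prime_two hl hd2l with rfl | rfl | rfl | rfl <;>
          simp at hdnot
      · rw [ArithmeticFunction.moebius_eq_zero_of_not_squarefree hsq, zero_mul]
    rw [← Finset.sum_subset hDsub hzero, Finset.sum_insert (by simp; omega),
      Finset.sum_insert (by simp; omega), Finset.sum_insert (by simp; omega),
      Finset.sum_singleton] at hinv
    have hμ2l : (ArithmeticFunction.moebius (2 * l) : ℤ) = 1 := by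
      rw [ArithmeticFunction.isMultiplicative_moebius.map_mul_of_coprime
        ((Nat.coprime_primes Nat.prime_two hl).mpr (by omega)),
        ArithmeticFunction.moebius_apply_prime Nat.prime_two,
        ArithmeticFunction.moebius_apply_prime hl]
      ring
    rw [ArithmeticFunction.moebius_apply_one,
      ArithmeticFunction.moebius_apply_prime Nat.prime_two,
      ArithmeticFunction.moebius_apply_prime hl, hμ2l] at hinv
    have e1 : 2 ^ (s + 1) * l / 1 = 2 ^ (s + 1) * l := Nat.div_one _
    have e2 : 2 ^ (s + 1) * l / 2 = 2 ^ s * l := by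
      rw [pow_succ', mul_assoc]
      exact Nat.mul_div_cancel_left _ (by omega)
    have e3 : 2 ^ (s + 1) * l / l = 2 ^ (s + 1) := Nat.mul_div_cancel _ hlpos
    have e4 : 2 ^ (s + 1) * l / (2 * l) = 2 ^ s := by
      have h : 2 ^ (s + 1) * l = 2 ^ s * (2 * l) := by ring
      rw [h, Nat.mul_div_cancel _ (by omega)]
    rw [e1, e2, e3, e4] at hinv
    have c1 : (q : ℤ) ^ (2 ^ (s + 1) * l) = (A : ℤ) ^ (2 * l) := by
      have h : 2 ^ (s + 1) * l = 2 ^ s * (2 * l) := by rw [pow_succ]; ring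
      rw [hA, h]; push_cast; rw [pow_mul]
    have c2 : (q : ℤ) ^ (2 ^ s * l) = (A : ℤ) ^ l := by
      rw [hA]; push_cast; rw [pow_mul]
    have c3 : (q : ℤ) ^ (2 ^ (s + 1)) = (A : ℤ) ^ 2 := by
      have h : 2 ^ (s + 1) = 2 ^ s * 2 := pow_succ 2 s
      rw [hA, h]; push_cast; rw [pow_mul]
    have c4 : (q : ℤ) ^ (2 ^ s) = (A : ℤ) := by rw [hA]; push_cast; try rfl
    rw [c1, c2, c3, c4] at hinv
    -- hinv : (2^(s+1)*l : ℤ) * N = 1 * A^(2l) + (-1) * A^l + ((-1) * A^2 + 1 * A)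
    have e1' : (A : ℤ) ^ l = (A : ℤ) * (A : ℤ) ^ (l - 1) := by
      rw [← pow_succ']; congr 1; omega
    have e2' : (A : ℤ) ^ (2 * l) = (A : ℤ) ^ 2 * ((A : ℤ) ^ (l - 1)) ^ 2 := by
      rw [← pow_mul, ← pow_add]; congr 1; omega
    have hfac : (A : ℤ) ^ (2 * l) - (A : ℤ) ^ l - (A : ℤ) ^ 2 + A
        = (A : ℤ) * ((A : ℤ) ^ (l - 1) - 1) * ((A : ℤ) * ((A : ℤ) ^ (l - 1) + 1) - 1) := by
      linear_combination e2' - e1'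
    have hpow2 : 2 ≤ A ^ (l - 1) := Nat.one_lt_pow (by omega) (by omega)
    have hC2 : 2 ≤ A * (A ^ (l - 1) + 1) := by
      calc (2:ℕ) ≤ A := hA2
      _ ≤ A * (A ^ (l - 1) + 1) := Nat.le_mul_of_pos_right A (by omega)
    have hnat : 2 ^ (s + 1) * l * N = A * (A ^ (l - 1) - 1) * (A * (A ^ (l - 1) + 1) - 1) := by
      zify [show 1 ≤ A ^ (l - 1) by omega, show 1 ≤ A * (A ^ (l - 1) + 1) by omega]
      push_cast at hinv
      linear_combination hinv + hfac
    have hprodpos : 0 < A * (A ^ (l - 1) - 1) * (A * (A ^ (l - 1) + 1) - 1) :=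
      Nat.mul_pos (Nat.mul_pos (by omega) (by omega)) (by omega)
    have hNne : N ≠ 0 := by
      intro h0
      rw [h0, mul_zero] at hnat
      omega
    have hlA : ¬ l ∣ A := fun h => hlq (hl.dvd_of_dvd_pow h)
    have hlA1 : l ∣ A - 1 := by
      refine hdvd.trans ?_
      have := Nat.sub_dvd_pow_sub_pow q 1 (2 ^ s)
      simpa using this
    have hvA : padicValNat l A = 0 := padicValNat.eq_zero_of_not_dvd hlA
    have hvA1 : padicValNat l (A - 1) = padicValNat l (q - 1) := by
      rw [hA]
      refine my_val_pow_sub_one hlodd (by omega) hdvd hlq (by omega) ?_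
      intro h
      have := Nat.le_of_dvd (by omega) (hl.dvd_of_dvd_pow h)
      omega
    have hvB : padicValNat l (A ^ (l - 1) - 1) = padicValNat l (q - 1) := by
      have h := padicValNat.pow_sub_pow (p := l) hlodd (x := A) (y := 1) (by omega)
        (by simpa using hlA1) hlA (show l - 1 ≠ 0 by omega)
      rw [one_pow] at h
      rw [h, hvA1, padicValNat.eq_zero_of_not_dvd hlm1]
      omega
    have hvC : padicValNat l (A * (A ^ (l - 1) + 1) - 1) = 0 := by
      apply padicValNat.eq_zero_of_not_dvd
      intro hdv
      have hzC : (l : ℤ) ∣ (A : ℤ) * ((A : ℤ) ^ (l - 1) + 1) - 1 := by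
        zify [show 1 ≤ A * (A ^ (l - 1) + 1) by omega] at hdv
        convert hdv using 1
        try (push_cast; ring)
      have hzA : (l : ℤ) ∣ (A : ℤ) - 1 := by
        have hlA1' := hlA1
        zify [show 1 ≤ A by omega] at hlA1'
        exact hlA1'
      have hzB : (l : ℤ) ∣ (A : ℤ) ^ (l - 1) - 1 :=
        hzA.trans (by simpa using sub_dvd_pow_sub_pow (A : ℤ) 1 (l - 1))
      have key : (l : ℤ) ∣ (A : ℤ) * ((A : ℤ) ^ (l - 1) + 1) - 2 := by
        have e : (A : ℤ) * ((A : ℤ) ^ (l - 1) + 1) - 2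
            = ((A : ℤ) - 1) * ((A : ℤ) ^ (l - 1) + 1) + ((A : ℤ) ^ (l - 1) - 1) := by ring
        rw [e]
        exact dvd_add (hzA.mul_right _) hzB
      have hone : (l : ℤ) ∣ 1 := by
        have h := dvd_sub hzC key
        have e : ((A : ℤ) * ((A : ℤ) ^ (l - 1) + 1) - 1) -
            ((A : ℤ) * ((A : ℤ) ^ (l - 1) + 1) - 2) = 1 := by ring
        rwa [e] at h
      have := Int.le_of_dvd one_pos hone
      omega
    have heq : padicValNat l (2 ^ (s + 1) * l * N) = padicValNat l (q - 1) := by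
      rw [hnat, padicValNat.mul (Nat.mul_pos (by omega) (by omega)).ne' (by omega),
        padicValNat.mul (by omega) (by omega), hvA, hvB, hvC]
      omega
    rw [padicValNat.mul (by omega) hNne,
      padicValNat.mul (by positivity) (by omega),
      padicValNat.eq_zero_of_not_dvd (show ¬ l ∣ 2 ^ (s + 1) by
        intro h
        have := Nat.le_of_dvd (by omega) (hl.dvd_of_dvd_pow h)
        omega),
      padicValNat_self] at heq
    omega

/-- If `ℓ` is an odd prime dividing `q - 1`, then for every `t ≥ 0` the number `N_q(2^t·ℓ)`
of monic irreducible polynomials of degree `2^t·ℓ` in `F_q[x]` satisfies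
`v_ℓ(N_q(2^t·ℓ)) = v_ℓ(q-1) - 1`. -/
theorem stmt17 {F : Type*} [Field F] [Fintype F] (q l : ℕ) (hq : Fintype.card F = q)
    (hl : l.Prime) (hlodd : Odd l) (hdvd : l ∣ q - 1) (t : ℕ) :
    padicValNat l
        ({f : F[X] | f.Monic ∧ Irreducible f ∧ f.natDegree = 2 ^ t * l}.ncard) =
      padicValNat l (q - 1) - 1 := by
  subst hq
  exact stmt17' l hl hlodd hdvd t
end

section
/- Let q be a power of 2 such that q - 1 is squarefree, and let m ≥ 2 be an integer. If for every partition λ of m the discriminants of the polynomials in S_{λ,F_q} are equally distributed among the elements of F_q^×, then gcd(q-1, m(m-1)) = 1. -/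
open Polynomial
open scoped Classical

namespace Stmt18Aux

open UniqueFactorizationMonoid ArithmeticFunction

noncomputable def Nirr (F : Type*) [Field F] (d : ℕ) : ℕ :=
  Nat.card {π : F[X] // π.Monic ∧ Irreducible π ∧ π.natDegree = d}

lemma pow_fix {K : Type*} [Monoid K] (q : ℕ) (x : K) (a : ℕ) (hx : x ^ q ^ a = x) :
    ∀ k, x ^ q ^ (a * k) = x := by
  intro k
  induction k with
  | zero => simp
  | succ k ih => rw [Nat.mul_succ, pow_add, pow_mul, ih, hx]

lemma dvd_iff {F : Type*} [Field F] [Fintype F] {π : F[X]} (hmo : π.Monic) (hi : Irreducible π)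
    {n : ℕ} (hn : n ≠ 0) :
    π ∣ X ^ Fintype.card F ^ n - X ↔ π.natDegree ∣ n := by
  classical
  set q := Fintype.card F with hq
  have hq2 : 1 < q := Fintype.one_lt_card
  have hπ0 : π ≠ 0 := hi.ne_zero
  haveI : Fact (Irreducible π) := ⟨hi⟩
  set K := AdjoinRoot π with hK
  set α : K := AdjoinRoot.root π with hα
  set d := π.natDegree with hd
  have hd0 : 0 < d := hi.natDegree_pos
  haveI : Module.Finite F K := (AdjoinRoot.powerBasis hπ0).finite
  haveI : Finite K := Module.finite_of_finite F
  haveI : Fintype K := Fintype.ofFinite K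
  have hcardK : Fintype.card K = q ^ d := by
    rw [Module.card_eq_pow_finrank (K := F) (V := K), (AdjoinRoot.powerBasis hπ0).finrank,
      AdjoinRoot.powerBasis_dim]
  have hdvd : π ∣ X ^ q ^ n - X ↔ α ^ q ^ n = α := by
    rw [← AdjoinRoot.mk_eq_zero, ← AdjoinRoot.aeval_eq]
    rw [map_sub, map_pow, AdjoinRoot.aeval_eq, AdjoinRoot.mk_X, sub_eq_zero]
  rw [hdvd]
  have fixd : ∀ x : K, x ^ q ^ d = x := by
    intro x
    have := FiniteField.pow_card x
    rwa [hcardK] at this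
  constructor
  · intro h
    -- gcd trick
    have hgcd : ∀ a b : ℕ, α ^ q ^ a = α → α ^ q ^ b = α → α ^ q ^ Nat.gcd a b = α := by
      intro a b
      induction a, b using Nat.gcd.induction with
      | H0 b => intro _ hb; simpa using hb
      | H1 a b ha ih =>
        intro h1 h2
        rw [Nat.gcd_rec]
        refine ih ?_ h1
        have hb : b = a * (b / a) + b % a := (Nat.div_add_mod b a).symm
        calc α ^ q ^ (b % a) = (α ^ q ^ (a * (b / a))) ^ q ^ (b % a) := by
              rw [pow_fix q α a h1]
          _ = α ^ q ^ b := by rw [← pow_mul, ← pow_add, ← hb]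
          _ = α := h2
    set r := Nat.gcd d n with hr
    have hrfix : α ^ q ^ r = α := hgcd d n (fixd α) h
    have hr0 : 0 < r := Nat.gcd_pos_of_pos_left n hd0
    -- get char
    obtain ⟨e, hp0prime, hqe⟩ := FiniteField.card F (ringChar F)
    set p0 := ringChar F with hp0
    haveI : Fact p0.Prime := ⟨hp0prime⟩
    haveI : CharP K p0 := charP_of_injective_algebraMap (algebraMap F K).injective p0
    haveI : ExpChar K p0 := ExpChar.prime hp0prime
    have hqr : (q : ℕ) ^ r = p0 ^ ((e : ℕ) * r) := by rw [hq, hqe, ← pow_mul]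
    -- the iterated Frobenius as an F-algebra hom
    have hcomm : ∀ a : F, (iterateFrobenius K p0 ((e : ℕ) * r)) (algebraMap F K a) =
        algebraMap F K a := by
      intro a
      rw [iterateFrobenius_def, ← map_pow, ← hqr]
      congr 1
      exact FiniteField.pow_card_pow r a
    let ψ : K →ₐ[F] K := { toRingHom := iterateFrobenius K p0 ((e : ℕ) * r),
                           commutes' := hcomm }
    have hαmem : α ∈ AlgHom.equalizer ψ (AlgHom.id F K) := by
      show ψ α = α
      show (iterateFrobenius K p0 ((e : ℕ) * r)) α = α
      rw [iterateFrobenius_def, ← hqr]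
      exact hrfix
    have htop : (⊤ : Subalgebra F K) ≤ AlgHom.equalizer ψ (AlgHom.id F K) := by
      rw [← AdjoinRoot.adjoinRoot_eq_top]
      exact Algebra.adjoin_le (Set.singleton_subset_iff.mpr hαmem)
    have hfixall : ∀ x : K, x ^ q ^ r = x := by
      intro x
      have hx : ψ x = x := htop (Algebra.mem_top) 
      rwa [show ψ x = x ^ p0 ^ ((e:ℕ)*r) from iterateFrobenius_def _ _ x, ← hqr] at hx
    -- count roots
    have hqr1 : 1 < q ^ r := Nat.one_lt_pow hr0.ne' hq2
    have hne : (X ^ q ^ r - X : K[X]) ≠ 0 := FiniteField.X_pow_card_sub_X_ne_zero K hqr1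
    have hsub : Finset.univ.val ≤ (X ^ q ^ r - X : K[X]).roots := by
      refine (Multiset.le_iff_subset Finset.univ.nodup).mpr ?_
      intro x _
      rw [Polynomial.mem_roots hne]
      simp [Polynomial.IsRoot, hfixall x]
    have hle : q ^ d ≤ q ^ r := by
      calc q ^ d = Fintype.card K := hcardK.symm
        _ = Multiset.card Finset.univ.val := rfl
        _ ≤ Multiset.card (X ^ q ^ r - X : K[X]).roots := Multiset.card_le_card hsub
        _ ≤ (X ^ q ^ r - X : K[X]).natDegree := (X ^ q ^ r - X : K[X]).card_roots'
        _ = q ^ r := FiniteField.X_pow_card_sub_X_natDegree_eq K hqr1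
    have hdr : d ≤ r := (Nat.pow_le_pow_iff_right hq2).mp hle
    have : r = d := le_antisymm (Nat.le_of_dvd hd0 (Nat.gcd_dvd_left d n)) hdr
    rw [← this]
    exact Nat.gcd_dvd_right d n
  · rintro ⟨k, rfl⟩
    exact pow_fix q α d (fixd α) k

lemma gauss {F : Type*} [Field F] [Fintype F] (n : ℕ) (hn : n ≠ 0) :
    Fintype.card F ^ n = ∑ d ∈ n.divisors, d * Nirr F d := by
  classical
  set q := Fintype.card F with hq
  have hq2 : 1 < q := Fintype.one_lt_card
  set g : F[X] := X ^ q ^ n - X with hg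
  have hg0 : g ≠ 0 := FiniteField.X_pow_card_pow_sub_X_ne_zero F hn hq2
  -- separable hence squarefree
  obtain ⟨e, hp0prime, hqe⟩ := FiniteField.card F (ringChar F)
  have hpq : ringChar F ∣ q := by
    rw [hq, hqe]
    exact dvd_pow_self (ringChar F) e.ne_zero
  have hsep : Separable g :=
    galois_poly_separable (ringChar F) (q ^ n) (dvd_pow hpq hn)
  have hsf : Squarefree g := hsep.squarefree
  set M := normalizedFactors g with hM
  have hmonicM : ∀ π ∈ M, Monic π := by
    intro π hπ
    have h1 : normalize π = π := normalize_normalized_factor π hπ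
    have h2 : π ≠ 0 := (prime_of_normalized_factor π hπ).ne_zero
    rw [← h1]; exact monic_normalize h2
  have hprod : M.prod = g := by
    refine eq_of_monic_of_associated ?_ ?_ (prod_normalizedFactors hg0)
    · have := monic_multiset_prod_of_monic M id (fun i hi => hmonicM i hi)
      rwa [Multiset.map_id] at this
    · have : g.natDegree = q ^ n := FiniteField.X_pow_card_pow_sub_X_natDegree_eq F hn hq2
      have h1 : (X : F[X]).degree < (X ^ q ^ n : F[X]).degree := by
        rw [degree_X, degree_X_pow]
        exact_mod_cast hq2.trans_le (Nat.le_self_pow hn q)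
      have := monic_X_pow (R := F) (n := q ^ n)
      simpa [hg] using this.sub_of_left h1
  have hnodup : M.Nodup := (squarefree_iff_nodup_normalizedFactors hg0).mp hsf
  set T : Finset F[X] := M.toFinset with hT
  have hTval : T.val = M := Multiset.dedup_eq_self.mpr hnodup
  have hdeg : q ^ n = ∑ π ∈ T, π.natDegree := by
    have h1 : g.natDegree = q ^ n := FiniteField.X_pow_card_pow_sub_X_natDegree_eq F hn hq2
    have h2 : M.prod.natDegree = (M.map natDegree).sum := by
      refine natDegree_multiset_prod M ?_
      intro h0
      exact (prime_of_normalized_factor 0 h0).ne_zero rfl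
    rw [← h1, ← hprod, h2, Finset.sum]
    rw [hTval]
  have hmem : ∀ π : F[X], π ∈ T ↔ (π.Monic ∧ Irreducible π ∧ π.natDegree ∣ n) := by
    intro π
    rw [Multiset.mem_toFinset]
    constructor
    · intro hπ
      have hmo := hmonicM π hπ
      have hp := prime_of_normalized_factor π hπ
      have hdvd : π ∣ g := dvd_of_mem_normalizedFactors hπ
      exact ⟨hmo, hp.irreducible, (dvd_iff hmo hp.irreducible hn).mp hdvd⟩
    · rintro ⟨hmo, hirr, hdn⟩
      have hdvd : π ∣ g := (dvd_iff hmo hirr hn).mpr hdn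
      obtain ⟨ρ, hρ, hassoc⟩ := exists_mem_normalizedFactors_of_dvd hg0 hirr hdvd
      rwa [eq_of_monic_of_associated hmo (hmonicM ρ hρ) hassoc]
  -- fiberwise sum
  rw [hdeg, ← Finset.sum_fiberwise_of_maps_to (g := fun π => π.natDegree) (t := n.divisors)
    (fun π hπ => Nat.mem_divisors.mpr ⟨((hmem π).mp hπ).2.2, hn⟩)]
  refine Finset.sum_congr rfl ?_
  intro d hd
  have hstep : ∑ π ∈ T.filter (fun π => π.natDegree = d), π.natDegree
      = (T.filter (fun π => π.natDegree = d)).card * d := by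
    rw [Finset.sum_congr rfl (fun π hπ => (Finset.mem_filter.mp hπ).2), Finset.sum_const,
      smul_eq_mul]
  rw [hstep]
  have hcard : (T.filter (fun π => π.natDegree = d)).card = Nirr F d := by
    have hset : {π : F[X] | π.Monic ∧ Irreducible π ∧ π.natDegree = d}
        = ↑(T.filter (fun π => π.natDegree = d)) := by
      ext π
      simp only [Set.mem_setOf_eq, Finset.coe_filter, Finset.mem_coe, hmem π]
      constructor
      · rintro ⟨h1, h2, h3⟩
        exact ⟨⟨h1, h2, h3 ▸ (Nat.mem_divisors.mp hd).1⟩, h3⟩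
      · rintro ⟨⟨h1, h2, _⟩, h4⟩
        exact ⟨h1, h2, h4⟩
    rw [Nirr, show {π : F[X] // π.Monic ∧ Irreducible π ∧ π.natDegree = d}
        = ↥{π : F[X] | π.Monic ∧ Irreducible π ∧ π.natDegree = d} from rfl,
      Nat.card_coe_set_eq, hset, Set.ncard_coe_finset]
  rw [hcard, mul_comm]

lemma qpow_mod (p t q : ℤ) (hq : q = 1 + p * t) (e : ℕ) :
    q ^ e ≡ 1 + p * t * e [ZMOD p ^ 2] := by
  induction e with
  | zero => simp
  | succ e ih =>
    have h1 : q ^ (e + 1) = q ^ e * q := by ring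
    have h2 : q ^ e * q ≡ (1 + p * t * e) * (1 + p * t) [ZMOD p ^ 2] :=
      Int.ModEq.mul ih (by rw [hq])
    have h3 : (1 + p * t * e) * (1 + p * t) ≡ 1 + p * t * (e + 1) [ZMOD p ^ 2] := by
      refine Int.modEq_iff_dvd.mpr ?_
      refine ⟨-(t ^ 2 * e), ?_⟩
      ring
    rw [h1]
    exact h2.trans h3

lemma Nirr_one {F : Type*} [Field F] [Fintype F] : Nirr F 1 = Fintype.card F := by
  have := gauss (F := F) 1 one_ne_zero
  simpa using this.symm


lemma Nirr_not_dvd {F : Type*} [Field F] [Fintype F] {p s : ℕ} (hp : p.Prime)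
    (hpq : p ∣ Fintype.card F - 1) (hp2 : ¬ p * p ∣ Fintype.card F - 1)
    (hs : ¬ p ∣ s) (hphi : ¬ p ∣ Nat.totient (p * s)) :
    ¬ p ∣ Nirr F (p * s) := by
  classical
  intro hN
  set q := Fintype.card F with hqdef
  have hq2 : 1 < q := Fintype.one_lt_card
  set d := p * s with hd
  have hs0 : s ≠ 0 := fun h => hs (h ▸ dvd_zero p)
  have hd0 : 0 < d := Nat.mul_pos hp.pos (Nat.pos_of_ne_zero hs0)
  have hpd : p ∣ d := dvd_mul_right p s
  have hd1 : d ≠ 1 := by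
    intro h
    exact hp.one_lt.ne' (Nat.eq_one_of_dvd_one (h ▸ hpd))
  set t := (q - 1) / p with ht
  have hptq : p * t = q - 1 := Nat.mul_div_cancel' hpq
  have hqt : (q : ℤ) = 1 + p * t := by
    have h1 : ((q - 1 : ℕ) : ℤ) = (q : ℤ) - 1 := by
      rw [Nat.cast_sub hq2.le]; norm_num
    have h2 : ((p * t : ℕ) : ℤ) = (q : ℤ) - 1 := by rw [hptq, h1]
    push_cast at h2
    linarith
  have hpt : ¬ p ∣ t := by
    intro h
    obtain ⟨u, hu⟩ := h
    exact hp2 ⟨u, by rw [← hptq, hu, mul_assoc]⟩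
  have hgauss : ∀ n > 0, ∑ i ∈ n.divisors, ((i * Nirr F i : ℕ) : ℤ) = (q : ℤ) ^ n := by
    intro n hn
    have h := gauss (F := F) n hn.ne'
    exact_mod_cast congrArg (fun x : ℕ => (x : ℤ)) h.symm
  have hinv := (ArithmeticFunction.sum_eq_iff_sum_smul_moebius_eq
      (f := fun i => ((i * Nirr F i : ℕ) : ℤ)) (g := fun n => (q : ℤ) ^ n)).mp hgauss d hd0
  set A := d.divisorsAntidiagonal with hA
  have hstep : (p : ℤ) ^ 2 ∣ (∑ x ∈ A, (ArithmeticFunction.moebius x.1 : ℤ) • (q : ℤ) ^ x.2)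
      - ∑ x ∈ A, (ArithmeticFunction.moebius x.1 : ℤ) * (1 + p * t * x.2) := by
    rw [← Finset.sum_sub_distrib]
    refine Finset.dvd_sum fun x _ => ?_
    have h1 : (p : ℤ) ^ 2 ∣ (q : ℤ) ^ x.2 - (1 + p * t * x.2) :=
      (qpow_mod p t q hqt x.2).symm.dvd
    rw [smul_eq_mul, ← mul_sub]
    exact h1.mul_left _
  have hsplit : ∑ x ∈ A, (ArithmeticFunction.moebius x.1 : ℤ) * (1 + p * t * x.2)
      = (∑ x ∈ A, (ArithmeticFunction.moebius x.1 : ℤ)) + p * t * ∑ x ∈ A, (ArithmeticFunction.moebius x.1 : ℤ) * x.2 := by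
    rw [Finset.mul_sum, ← Finset.sum_add_distrib]
    exact Finset.sum_congr rfl fun x _ => by ring
  have hS1 : ∑ x ∈ A, (ArithmeticFunction.moebius x.1 : ℤ) = 0 := by
    have h := congrArg (fun f : ArithmeticFunction ℤ => f d) moebius_mul_coe_zeta
    simp only [ArithmeticFunction.mul_apply] at h
    rw [ArithmeticFunction.one_apply_ne hd1] at h
    rw [← h]
    refine Finset.sum_congr rfl fun x hx => ?_
    rcases Nat.mem_divisorsAntidiagonal.mp hx with ⟨hxe, hdne⟩
    have hx2 : x.2 ≠ 0 := by
      intro h0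
      rw [h0, mul_zero] at hxe
      exact hdne hxe.symm
    rw [ArithmeticFunction.natCoe_apply, ArithmeticFunction.zeta_apply, if_neg hx2]
    norm_num
  have hS2 : ∑ x ∈ A, (ArithmeticFunction.moebius x.1 : ℤ) * x.2 = (Nat.totient d : ℤ) := by
    have htot : ∀ n : ℕ, n > 0 → ∑ i ∈ n.divisors, ((Nat.totient i : ℤ)) = (n : ℤ) := by
      intro n _
      exact_mod_cast congrArg (fun x : ℕ => (x : ℤ)) (Nat.sum_totient n)
    have h := (ArithmeticFunction.sum_eq_iff_sum_smul_moebius_eq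
        (f := fun i => ((Nat.totient i : ℤ))) (g := fun n => (n : ℤ))).mp htot d hd0
    simpa [smul_eq_mul] using h
  have hfinal : (p : ℤ) ^ 2 ∣ ((d * Nirr F d : ℕ) : ℤ) - p * t * (Nat.totient d : ℤ) := by
    have h1 : ∑ x ∈ A, (ArithmeticFunction.moebius x.1 : ℤ) • (q : ℤ) ^ x.2 = ((d * Nirr F d : ℕ) : ℤ) := hinv
    have h2 : ∑ x ∈ A, (ArithmeticFunction.moebius x.1 : ℤ) * (1 + p * t * x.2)
        = p * t * (Nat.totient d : ℤ) := by rw [hsplit, hS1, hS2, zero_add]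
    rw [← h1, ← h2]
    exact hstep
  have hdN : (p : ℤ) ^ 2 ∣ ((d * Nirr F d : ℕ) : ℤ) := by
    push_cast
    rw [sq]
    exact mul_dvd_mul (Int.natCast_dvd_natCast.mpr hpd) (Int.natCast_dvd_natCast.mpr hN)
  have hrem : (p : ℤ) ^ 2 ∣ p * t * (Nat.totient d : ℤ) := by
    have := dvd_sub hdN hfinal
    simpa using this
  have hptphi : (p : ℤ) ∣ t * (Nat.totient d : ℤ) := by
    have hpne : (p : ℤ) ≠ 0 := by exact_mod_cast hp.pos.ne'
    rw [sq, mul_assoc] at hrem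
    exact (mul_dvd_mul_iff_left hpne).mp hrem
  have hpZ : Prime (p : ℤ) := Int.prime_iff_natAbs_prime.mpr (by simpa using hp)
  rcases hpZ.dvd_mul.mp hptphi with h | h
  · exact hpt (Int.natCast_dvd_natCast.mp h)
  · exact hphi (Int.natCast_dvd_natCast.mp h)

lemma card_S {F : Type*} [Field F] {m : ℕ} (lam : m.Partition) (D : Finset ℕ)
    (hD : lam.parts = D.val) :
    {f : F[X] | hasFactorizationType f lam}.ncard = ∏ d ∈ D, Nirr F d := by
  classical
  set B := ∀ d : {x // x ∈ D}, {π : F[X] // π.Monic ∧ Irreducible π ∧ π.natDegree = d.val}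
    with hB
  set Φ : B → F[X] := fun g => ∏ d ∈ D.attach, ((g d : F[X])) with hΦ
  have hinj : Function.Injective Φ := by
    intro g g' h
    funext d0
    have h' : ∏ d ∈ D.attach, ((g d : F[X])) = ∏ d ∈ D.attach, ((g' d : F[X])) := h
    have hdvd : ((g d0 : F[X])) ∣ ∏ d ∈ D.attach, ((g' d : F[X])) := by
      rw [← h']
      exact Finset.dvd_prod_of_mem _ (Finset.mem_attach _ d0)
    have hp : Prime ((g d0 : F[X])) :=
      UniqueFactorizationMonoid.irreducible_iff_prime.mp (g d0).2.2.1
    obtain ⟨d1, _, hdvd1⟩ := hp.exists_mem_finset_dvd hdvd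
    have heq : ((g d0 : F[X])) = ((g' d1 : F[X])) :=
      eq_of_monic_of_associated (g d0).2.1 (g' d1).2.1
        ((g d0).2.2.1.associated_of_dvd (g' d1).2.2.1 hdvd1)
    have hd01 : d0 = d1 := by
      apply Subtype.ext
      rw [← (g d0).2.2.2, ← (g' d1).2.2.2, heq]
    apply Subtype.ext
    rw [heq, hd01]
  have hrange : {f : F[X] | hasFactorizationType f lam} = Set.range Φ := by
    ext f
    simp only [Set.mem_setOf_eq, Set.mem_range]
    constructor
    · rintro ⟨s, hs1, hs2, hs3⟩
      rw [hD] at hs3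
      -- for each d ∈ D there is a unique element of s of degree d
      have huniq : ∀ d : ℕ, d ∈ D → ∃ π : F[X],
          Multiset.filter (fun a => d = natDegree a) s.val = {π} := by
        intro d hd
        have h1 : Multiset.count d (Multiset.map natDegree s.val) = 1 := by
          rw [hs3]
          exact Multiset.count_eq_one_of_mem D.nodup hd
        rw [Multiset.count_map] at h1
        exact Multiset.card_eq_one.mp h1
      choose π₀ hπ₀ using huniq
      have hπmem : ∀ (d : ℕ) (hd : d ∈ D), π₀ d hd ∈ s.val ∧ d = natDegree (π₀ d hd) := by
        intro d hd
        have : π₀ d hd ∈ Multiset.filter (fun a => d = natDegree a) s.val := by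
          rw [hπ₀ d hd]; exact Multiset.mem_singleton_self _
        exact Multiset.mem_filter.mp this
      refine ⟨fun d => ⟨π₀ d.val d.2, (hs1 _ (hπmem d.val d.2).1).1, (hs1 _ (hπmem d.val d.2).1).2,
        ((hπmem d.val d.2).2).symm⟩, ?_⟩
      show ∏ d ∈ D.attach, π₀ d.val d.2 = f
      rw [← hs2]
      refine Finset.prod_bij' (fun d _ => π₀ d.val d.2)
        (fun π hπ => ⟨natDegree π, ?_⟩) ?_ ?_ ?_ ?_ ?_
      · have hπ' : π ∈ s.val := hπ
        have : natDegree π ∈ Multiset.map natDegree s.val := Multiset.mem_map_of_mem _ hπ'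
        rwa [hs3] at this
      · intro d _
        exact (hπmem d.val d.2).1
      · intro π hπ
        exact Finset.mem_attach _ _
      · intro d _
        apply Subtype.ext
        exact ((hπmem d.val d.2).2).symm
      · intro π hπ
        have hmem2 : π ∈ Multiset.filter (fun a => natDegree π = natDegree a) s.val :=
          Multiset.mem_filter.mpr ⟨hπ, rfl⟩
        have := hπ₀ (natDegree π) (by
          have : natDegree π ∈ Multiset.map natDegree s.val := Multiset.mem_map_of_mem _ hπ
          rwa [hs3] at this)
        rw [this] at hmem2
        exact (Multiset.mem_singleton.mp hmem2).symm
      · intro d _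
        rfl
    · rintro ⟨g, rfl⟩
      have hinj2 : Function.Injective (fun d : {x // x ∈ D} => ((g d : F[X]))) := by
        intro d d' h
        have h' : ((g d : F[X])) = ((g d' : F[X])) := h
        apply Subtype.ext
        rw [← (g d).2.2.2, ← (g d').2.2.2, h']
      refine ⟨D.attach.map ⟨fun d => ((g d : F[X])), hinj2⟩, ?_, ?_, ?_⟩
      · intro π hπ
        obtain ⟨d, _, rfl⟩ := Finset.mem_map.mp hπ
        exact ⟨(g d).2.1, (g d).2.2.1⟩
      · rw [Finset.prod_map]
        rfl
      · rw [hD, Finset.map_val, Finset.attach_val, Multiset.map_map]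
        have hptw : ∀ d ∈ D.val.attach,
            (natDegree ∘ (Function.Embedding.mk (fun d => ((g d : F[X]))) hinj2)) d = d.val :=
          fun d _ => (g d).2.2.2
        rw [Multiset.map_congr rfl hptw, Multiset.attach_map_val]
  rw [hrange, ← Nat.card_coe_set_eq, Nat.card_range_of_injective hinj, hB, Nat.card_pi]
  rw [Finset.univ_eq_attach]
  exact Finset.prod_attach D (fun d => Nirr F d)

lemma exists_binary (s : ℕ) : ∃ J : Finset ℕ, (∑ j ∈ J, 2 ^ j = s) ∧ ∀ j ∈ J, 2 ^ j ≤ s := by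
  induction s using Nat.strong_induction_on with
  | _ s ih =>
    rcases Nat.eq_zero_or_pos s with rfl | hs
    · exact ⟨∅, by simp, by simp⟩
    · set j := Nat.log 2 s with hj
      have h1 : 2 ^ j ≤ s := Nat.pow_log_le_self 2 hs.ne'
      have h2 : s < 2 ^ (j + 1) := Nat.lt_pow_succ_log_self one_lt_two s
      have hp2 : 0 < 2 ^ j := Nat.pow_pos (by norm_num)
      have hlt : s - 2 ^ j < s := by omega
      obtain ⟨J', hJ1, hJ2⟩ := ih (s - 2 ^ j) hlt
      have hpow : 2 ^ (j + 1) = 2 * 2 ^ j := by rw [pow_succ]; ring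
      have hnot : j ∉ J' := by
        intro hjJ
        have := hJ2 j hjJ
        omega
      refine ⟨insert j J', ?_, ?_⟩
      · rw [Finset.sum_insert hnot, hJ1]
        omega
      · intro i hi
        rcases Finset.mem_insert.mp hi with rfl | hi'
        · exact h1
        · exact (hJ2 i hi').trans (by omega)

end Stmt18Aux

open Stmt18Aux in
/-- Converse direction for `q` a power of `2` with `q - 1` squarefree: if for every partition
`λ` of `m ≥ 2` the discriminants of the polynomials in `S_{λ,F_q}` are equally distributed
among the elements of `F_q^×` (i.e. each `d ∈ F_q^×` is the discriminant of exactly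
`|S_{λ,F_q}|/(q-1)` polynomials of `S_{λ,F_q}`), then `gcd(q-1, m(m-1)) = 1`. -/
theorem stmt18 {F : Type*} [Field F] [Fintype F] (q m : ℕ) (hq : Fintype.card F = q)
    (h2 : ∃ n : ℕ, q = 2 ^ n) (hsf : Squarefree (q - 1)) (hm : 2 ≤ m)
    (hdist : ∀ lam : m.Partition, ∀ d : F, d ≠ 0 →
      {f : F[X] | hasFactorizationType f lam ∧
          polyDisc f = algebraMap F (AlgebraicClosure F) d}.ncard * (q - 1) =
      {f : F[X] | hasFactorizationType f lam}.ncard) :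
    Nat.gcd (q - 1) (m * (m - 1)) = 1 := by
  subst hq
  set q := Fintype.card F with hqdef
  by_contra hgcd1
  have hq2 : 1 < q := Fintype.one_lt_card
  set G := Nat.gcd (q - 1) (m * (m - 1)) with hG
  have hp : G.minFac.Prime := Nat.minFac_prime hgcd1
  set p := G.minFac with hpdef
  have hpq1 : p ∣ q - 1 := G.minFac_dvd.trans (Nat.gcd_dvd_left _ _)
  have hpm : p ∣ m * (m - 1) := G.minFac_dvd.trans (Nat.gcd_dvd_right _ _)
  obtain ⟨n0, hn0⟩ := h2
  have hn0pos : n0 ≠ 0 := by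
    rintro rfl
    rw [pow_zero] at hn0
    omega
  have hq_even : 2 ∣ q := by rw [hn0]; exact dvd_pow_self 2 hn0pos
  have hodd : ¬ 2 ∣ (q - 1) := by omega
  have hpne2 : p ≠ 2 := fun h => hodd (h ▸ hpq1)
  have hp2sq : ¬ p * p ∣ q - 1 := by
    intro h
    exact hp.one_lt.ne' (Nat.isUnit_iff.mp (hsf p h))
  have hgood : ∀ j : ℕ, ¬ p ∣ Nirr F (p * 2 ^ j) := by
    intro j
    have hnd2 : ¬ p ∣ 2 ^ j := by
      intro h
      exact hpne2 ((Nat.prime_dvd_prime_iff_eq hp Nat.prime_two).mp (hp.dvd_of_dvd_pow h))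
    refine Nirr_not_dvd hp hpq1 hp2sq hnd2 ?_
    have hcop : Nat.Coprime p (2 ^ j) :=
      Nat.Coprime.pow_right j ((Nat.coprime_primes hp Nat.prime_two).mpr hpne2)
    rw [Nat.totient_mul hcop, Nat.totient_prime hp]
    intro h
    rcases (Nat.Prime.dvd_mul hp).mp h with h' | h'
    · have hp2le := hp.two_le
      have h1 : 0 < p - 1 := by omega
      have := Nat.le_of_dvd h1 h'
      omega
    · rcases Nat.eq_zero_or_pos j with rfl | hj
      · rw [pow_zero, Nat.totient_one] at h'
        exact hp.one_lt.ne' (Nat.dvd_one.mp h')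
      · rw [Nat.totient_prime_pow Nat.prime_two hj] at h'
        norm_num at h'
        exact hpne2 ((Nat.prime_dvd_prime_iff_eq hp Nat.prime_two).mp
          (hp.dvd_of_dvd_pow h'))
  have key : ∀ (lam : m.Partition) (D : Finset ℕ), lam.parts = D.val →
      (∀ d ∈ D, ¬ p ∣ Nirr F d) → False := by
    intro lam D hD hgoodD
    have h1 := hdist lam 1 one_ne_zero
    have h2 := card_S (F := F) lam D hD
    rw [h2] at h1
    have hdvd : (q - 1) ∣ ∏ d ∈ D, Nirr F d := Dvd.intro_left _ h1
    have hpdvd : p ∣ ∏ d ∈ D, Nirr F d := hpq1.trans hdvd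
    obtain ⟨d, hdD, hpd⟩ := hp.prime.exists_mem_finset_dvd hpdvd
    exact hgoodD d hdD hpd
  have hinj : ∀ J : Finset ℕ, Set.InjOn (fun j => p * 2 ^ j) J := by
    intro J a _ b _ h
    simp only at h
    exact Nat.pow_right_injective le_rfl (Nat.eq_of_mul_eq_mul_left hp.pos h)
  rcases (Nat.Prime.dvd_mul hp).mp hpm with hdm | hdm
  · -- p ∣ m
    obtain ⟨J, hJsum, -⟩ := exists_binary (m / p)
    set D := J.image (fun j => p * 2 ^ j) with hD
    have hsum : ∑ d ∈ D, d = m := by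
      rw [hD, Finset.sum_image (hinj J), ← Finset.mul_sum, hJsum, Nat.mul_div_cancel' hdm]
    have hsum' : D.val.sum = m := by
      rw [← hsum, Finset.sum]
      rw [Multiset.map_id']
    have hpos : ∀ {i : ℕ}, i ∈ D.val → 0 < i := by
      intro i hi
      obtain ⟨j, -, rfl⟩ := Finset.mem_image.mp hi
      exact Nat.mul_pos hp.pos (Nat.pow_pos two_pos)
    exact key ⟨D.val, hpos, hsum'⟩ D rfl (by
      intro d hd
      obtain ⟨j, -, rfl⟩ := Finset.mem_image.mp hd
      exact hgood j)
  · -- p ∣ m - 1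
    obtain ⟨J, hJsum, -⟩ := exists_binary ((m - 1) / p)
    have hone : (1 : ℕ) ∉ J.image (fun j => p * 2 ^ j) := by
      intro h
      obtain ⟨j, -, hj⟩ := Finset.mem_image.mp h
      have := hp.two_le
      have h2j : 1 ≤ 2 ^ j := Nat.one_le_two_pow
      nlinarith
    set D := insert 1 (J.image (fun j => p * 2 ^ j)) with hD
    have hsum : ∑ d ∈ D, d = m := by
      rw [hD, Finset.sum_insert hone, Finset.sum_image (hinj J), ← Finset.mul_sum, hJsum,
        Nat.mul_div_cancel' hdm]
      omega
    have hsum' : D.val.sum = m := by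
      rw [← hsum, Finset.sum]
      rw [Multiset.map_id']
    have hpos : ∀ {i : ℕ}, i ∈ D.val → 0 < i := by
      intro i hi
      rcases Finset.mem_insert.mp hi with rfl | hi'
      · norm_num
      · obtain ⟨j, -, rfl⟩ := Finset.mem_image.mp hi'
        exact Nat.mul_pos hp.pos (Nat.pow_pos two_pos)
    refine key ⟨D.val, hpos, hsum'⟩ D rfl ?_
    intro d hd
    rcases Finset.mem_insert.mp hd with rfl | hd'
    · rw [Nirr_one]
      intro hdq
      have hd1 : p ∣ q - (q - 1) := Nat.dvd_sub hdq hpq1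
      have he : q - (q - 1) = 1 := by omega
      rw [he] at hd1
      exact hp.one_lt.ne' (Nat.dvd_one.mp hd1)
    · obtain ⟨j, -, rfl⟩ := Finset.mem_image.mp hd'
      exact hgood j
end

section
/- Let p be a prime and q a power of p. For every integer m ≥ p with m ≥ 2 and every d ∈ F_q, there exists a monic polynomial f ∈ F_q[x] of degree m such that disc(f) = d. -/
open Polynomial
open scoped Classical

/- ### Auxiliary lemmas -/

private lemma multiset_prod_map_aux {K : Type*} [CommRing K] (R : Multiset K) (c : K) (e j : ℕ) :
    (R.map fun a => c * a ^ e * (a - 1) ^ j).prod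
      = c ^ Multiset.card R * R.prod ^ e * (R.map fun a => a - 1).prod ^ j := by
  induction R using Multiset.induction_on with
  | empty => simp
  | cons a s ih =>
      rw [Multiset.map_cons, Multiset.map_cons, Multiset.prod_cons, Multiset.prod_cons,
        Multiset.prod_cons, Multiset.card_cons, ih, mul_pow a s.prod, mul_pow (a - 1), pow_succ]
      ring

private lemma multiset_prod_map_sub_one {K : Type*} [CommRing K] (R : Multiset K) :
    (R.map fun a => a - 1).prod = (-1) ^ Multiset.card R * (R.map fun a => 1 - a).prod := by
  induction R using Multiset.induction_on with
  | empty => simp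
  | cons a s ih =>
      rw [Multiset.map_cons, Multiset.map_cons, Multiset.prod_cons, Multiset.prod_cons,
        Multiset.card_cons, ih, pow_succ]
      ring

/-- Key computation: if the derivative of a monic `f` of degree `m ≥ 2` has the special form
`C c * X ^ e * (X - 1) ^ j`, then the discriminant of `f` is explicitly computable
from `c`, `f.coeff 0` and `f.eval 1`. -/
private lemma polyDisc_formula {F : Type*} [Field F] (f : F[X]) (hf : f.Monic) {m : ℕ}
    (hm : f.natDegree = m) (h2 : 2 ≤ m) (c : F) (e j : ℕ)
    (hd : derivative f = C c * X ^ e * (X - 1) ^ j) :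
    polyDisc f = algebraMap F (AlgebraicClosure F)
      ((-1) ^ (m * (m - 1) / 2) * (c ^ m * ((-1) ^ m * f.coeff 0) ^ e
        * ((-1) ^ m * f.eval 1) ^ j)) := by
  classical
  have hne : ¬ f.natDegree ≤ 1 := by omega
  unfold polyDisc
  rw [if_neg hne, hm, hf.leadingCoeff, map_one, one_pow, mul_one]
  set K := AlgebraicClosure F with hK
  set φ := algebraMap F K with hφ
  have hfm : (f.map φ).Monic := hf.map φ
  have hdeg : (f.map φ).natDegree = m := by rw [hf.natDegree_map φ, hm]
  have hsplit : Splits (f.map φ) := IsAlgClosed.splits (f.map φ)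
  have hcard : Multiset.card (f.map φ).roots = m := by
    rw [splits_iff_card_roots.mp hsplit, hdeg]
  -- product of roots
  have hprodR : (f.map φ).roots.prod = (-1 : K) ^ m * φ (f.coeff 0) := by
    have h0 : (f.map φ).coeff 0 = (-1) ^ m * (f.map φ).roots.prod := by
      rw [hsplit.coeff_zero_eq_prod_roots_of_monic hfm, hdeg]
    have h1 : φ (f.coeff 0) = (-1 : K) ^ m * (f.map φ).roots.prod := by
      rw [← coeff_map, h0]
    rw [h1, ← mul_assoc, ← pow_add, (Even.add_self m).neg_one_pow, one_mul]
  -- product of (roots - 1)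
  have hprodR1 : ((f.map φ).roots.map fun a => a - 1).prod = (-1 : K) ^ m * φ (f.eval 1) := by
    have hfac : f.map φ = ((f.map φ).roots.map fun a => X - C a).prod :=
      hsplit.eq_prod_roots_of_monic hfm
    have he1 : φ (f.eval 1) = ((f.map φ).roots.map fun a => 1 - a).prod := by
      rw [← eval_one_map φ f]
      conv_lhs => rw [hfac]
      rw [eval_multiset_prod, Multiset.map_map]
      simp
    rw [multiset_prod_map_sub_one, hcard, he1]
  -- the main product
  have hmap : (derivative f).map φ = C (φ c) * X ^ e * (X - 1) ^ j := by
    rw [hd]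
    simp [Polynomial.map_mul, Polynomial.map_pow, Polynomial.map_sub]
  have hbig : (Multiset.map (fun a => ((derivative f).map φ).eval a) (f.map φ).roots).prod
      = (φ c) ^ m * (f.map φ).roots.prod ^ e
        * (((f.map φ).roots.map fun a => a - 1).prod) ^ j := by
    have h2' : (Multiset.map (fun a => ((derivative f).map φ).eval a) (f.map φ).roots)
        = (f.map φ).roots.map (fun a => φ c * a ^ e * (a - 1) ^ j) := by
      apply Multiset.map_congr rfl
      intro a _
      rw [hmap]
      simp
    rw [h2', multiset_prod_map_aux, hcard]
  rw [hbig, hprodR, hprodR1]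
  simp only [map_mul, map_pow, map_neg, map_one]

private lemma pow_char_surjective {F : Type*} [Field F] [Fintype F] (p : ℕ) (hp : p.Prime)
    [CharP F p] : ∀ y : F, ∃ x : F, x ^ p = y := by
  haveI : Fact p.Prime := ⟨hp⟩
  have hinj : Function.Injective fun x : F => x ^ p := by
    intro a b hab
    have h1 : (a - b) ^ p = 0 := by
      rw [sub_pow_char]
      simpa using sub_eq_zero.mpr hab
    exact sub_eq_zero.mp ((pow_eq_zero_iff hp.ne_zero).mp h1)
  exact Finite.injective_iff_surjective.mp hinj

/-- helper: `X ^ m + g` is monic of degree `m` when `deg g < m`. -/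
private lemma monic_natdeg_aux {F : Type*} [Field F] (g : F[X]) (m : ℕ)
    (hg : g.degree < (m : WithBot ℕ)) :
    (X ^ m + g).Monic ∧ (X ^ m + g).natDegree = m := by
  have hX : (X ^ m : F[X]).degree = (m : WithBot ℕ) := degree_X_pow m
  have hlt : g.degree < (X ^ m : F[X]).degree := by rw [hX]; exact hg
  refine ⟨(monic_X_pow m).add_of_left hlt, ?_⟩
  have hdeg : (X ^ m + g).degree = (m : WithBot ℕ) := by
    rw [degree_add_eq_left_of_degree_lt hlt, hX]
  exact natDegree_eq_of_degree_eq_some hdeg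

/-- Surjectivity of the discriminant: if `F_q` has characteristic `p` and `m ≥ p`, `m ≥ 2`,
then every `d ∈ F_q` is the discriminant of some monic polynomial of degree `m` in
`F_q[x]`. -/
theorem stmt19 {F : Type*} [Field F] [Fintype F] (p : ℕ) (hp : p.Prime) [CharP F p]
    (m : ℕ) (hm2 : 2 ≤ m) (hmp : p ≤ m) (d : F) :
    ∃ f : F[X], f.Monic ∧ f.natDegree = m ∧
      polyDisc f = algebraMap F (AlgebraicClosure F) d := by
  classical
  haveI : Fact p.Prime := ⟨hp⟩
  have hp2 : 2 ≤ p := hp.two_le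
  have hpF : ((p : ℕ) : F) = 0 := CharP.cast_eq_zero F p
  have hsur := pow_char_surjective (F := F) p hp
  by_cases hd0 : d = 0
  · -- d = 0 : take f = X ^ m
    refine ⟨X ^ m, monic_X_pow m, natDegree_X_pow m, ?_⟩
    have hder : derivative (X ^ m : F[X]) = C ((m : ℕ) : F) * X ^ (m - 1) * (X - 1) ^ 0 := by
      rw [derivative_X_pow, pow_zero, mul_one]
    rw [polyDisc_formula (X ^ m) (monic_X_pow m) (natDegree_X_pow m) hm2 _ _ _ hder]
    have hc0 : (X ^ m : F[X]).coeff 0 = 0 := by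
      rw [coeff_zero_eq_eval_zero, eval_pow, eval_X, zero_pow (show m ≠ 0 by omega)]
    rw [hd0, map_zero, hc0, mul_zero, zero_pow (by omega : m - 1 ≠ 0), mul_zero, zero_mul,
      mul_zero, map_zero]
  · -- d ≠ 0
    by_cases hpm : (p : ℕ) ∣ m
    · by_cases hmeqp : m = p
      · -- m = p : f = X ^ p + (C c * X ^ 1 + 1) with c ^ p = (-1)^(m(m-1)/2) * d
        obtain ⟨c, hc⟩ := hsur ((-1) ^ (m * (m - 1) / 2) * d)
        set g : F[X] := C c * X ^ 1 + 1 with hgdef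
        have hdegg : g.degree < (m : WithBot ℕ) := by
          rw [hgdef]
          apply lt_of_le_of_lt (degree_add_le _ _)
          apply max_lt
          · exact lt_of_le_of_lt (degree_C_mul_X_pow_le 1 c)
              (by exact_mod_cast (show (1 : ℕ) < m by omega))
          · exact lt_of_le_of_lt degree_one_le
              (by exact_mod_cast (show (0 : ℕ) < m by omega))
        obtain ⟨hmon, hdeg⟩ := monic_natdeg_aux g m hdegg
        refine ⟨X ^ m + g, hmon, hdeg, ?_⟩
        have hmF : ((m : ℕ) : F) = 0 := (CharP.cast_eq_zero_iff F p m).mpr hpm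
        have hder : derivative (X ^ m + g) = C c * X ^ 0 * (X - 1) ^ 0 := by
          rw [pow_zero, mul_one, pow_zero, mul_one, hgdef]
          rw [derivative_add, derivative_add, derivative_X_pow, derivative_one,
            derivative_C_mul, derivative_X_pow, hmF]
          simp
        rw [polyDisc_formula (X ^ m + g) hmon hdeg hm2 _ _ _ hder]
        have keyF : (-1 : F) ^ (m * (m - 1) / 2)
            * (c ^ m * ((-1) ^ m * (X ^ m + g).coeff 0) ^ 0
              * ((-1) ^ m * (X ^ m + g).eval 1) ^ 0) = d := by
          rw [pow_zero, pow_zero, mul_one, mul_one, (show c ^ m = c ^ p by rw [hmeqp]), hc,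
            ← mul_assoc, ← pow_add, (Even.add_self _).neg_one_pow, one_mul]
        exact congrArg (algebraMap F (AlgebraicClosure F)) keyF
      · -- p ∣ m, m ≠ p hence m ≥ 2p :
        -- f = X^m + (X^(m-p+1) - X^(m-p) - X^(m-2p+1) + C u * X^p + 1)
        have hm2p : 2 * p ≤ m := by
          obtain ⟨k, rfl⟩ := hpm
          have hk0 : k ≠ 0 := by rintro rfl; omega
          have hk1 : k ≠ 1 := by rintro rfl; exact hmeqp (by ring)
          have hk2 : 2 ≤ k := by omega
          calc 2 * p = p * 2 := by ring
            _ ≤ p * k := Nat.mul_le_mul_left p hk2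
        obtain ⟨t1, ht1⟩ := hsur ((-1) ^ (m * (m - 1) / 2) * d)
        obtain ⟨T, hT⟩ := hsur t1
        set u : F := (T - 1) ^ p with hu
        set g : F[X] := X ^ (m - p + 1) - X ^ (m - p) - X ^ (m - 2 * p + 1) + C u * X ^ p + 1
          with hgdef
        have hdegg : g.degree < (m : WithBot ℕ) := by
          rw [hgdef]
          apply lt_of_le_of_lt (degree_add_le _ _)
          apply max_lt
          · apply lt_of_le_of_lt (degree_add_le _ _)
            apply max_lt
            · apply lt_of_le_of_lt (degree_sub_le _ _)
              apply max_lt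
              · apply lt_of_le_of_lt (degree_sub_le _ _)
                apply max_lt
                · rw [degree_X_pow]
                  exact_mod_cast (show m - p + 1 < m by omega)
                · rw [degree_X_pow]
                  exact_mod_cast (show m - p < m by omega)
              · rw [degree_X_pow]
                exact_mod_cast (show m - 2 * p + 1 < m by omega)
            · exact lt_of_le_of_lt (degree_C_mul_X_pow_le p u)
                (by exact_mod_cast (show p < m by omega))
          · exact lt_of_le_of_lt degree_one_le
              (by exact_mod_cast (show (0 : ℕ) < m by omega))
        obtain ⟨hmon, hdeg⟩ := monic_natdeg_aux g m hdegg
        refine ⟨X ^ m + g, hmon, hdeg, ?_⟩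
        have hmF : ((m : ℕ) : F) = 0 := (CharP.cast_eq_zero_iff F p m).mpr hpm
        have hm_p1 : ((m - p + 1 : ℕ) : F) = 1 := by
          rw [Nat.cast_add, Nat.cast_sub (show p ≤ m by omega), hmF, hpF, Nat.cast_one]
          ring
        have hm_p : ((m - p : ℕ) : F) = 0 := by
          rw [Nat.cast_sub (show p ≤ m by omega), hmF, hpF]
          ring
        have hm_2p1 : ((m - 2 * p + 1 : ℕ) : F) = 1 := by
          rw [Nat.cast_add, Nat.cast_sub (show 2 * p ≤ m by omega), Nat.cast_mul, hmF, hpF,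
            Nat.cast_one, Nat.cast_two]
          ring
        have hXp : ((X : F[X]) - 1) ^ p = X ^ p - 1 := by
          have h := sub_pow_char (p := p) (X : F[X]) 1
          simpa using h
        have hder : derivative (X ^ m + g) = C (1 : F) * X ^ (m - 2 * p) * (X - 1) ^ p := by
          rw [hgdef]
          rw [derivative_add, derivative_add, derivative_add, derivative_sub, derivative_sub,
            derivative_X_pow, derivative_X_pow, derivative_X_pow, derivative_X_pow,
            derivative_C_mul, derivative_X_pow, derivative_one, hmF, hm_p1, hm_p, hm_2p1, hpF]
          rw [hXp, (show m - p + 1 - 1 = m - 2 * p + p by omega),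
            (show m - 2 * p + 1 - 1 = m - 2 * p by omega)]
          simp only [C_0, C_1, zero_mul, mul_zero, one_mul, mul_one, add_zero, zero_add,
            sub_zero, zero_sub]
          ring
        rw [polyDisc_formula (X ^ m + g) hmon hdeg hm2 _ _ _ hder]
        have hc0 : (X ^ m + g).coeff 0 = 1 := by
          rw [coeff_zero_eq_eval_zero, hgdef]
          simp only [eval_add, eval_sub, eval_pow, eval_X, eval_one, eval_mul, eval_C]
          rw [zero_pow (show m ≠ 0 by omega), zero_pow (show m - p + 1 ≠ 0 by omega),
            zero_pow (show m - p ≠ 0 by omega), zero_pow (show m - 2 * p + 1 ≠ 0 by omega),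
            zero_pow (show p ≠ 0 by omega)]
          ring
        have he1 : (X ^ m + g).eval 1 = T ^ p := by
          rw [hgdef]
          simp only [eval_add, eval_sub, eval_pow, eval_X, eval_one, eval_mul, eval_C, one_pow]
          rw [hu, sub_pow_char]
          ring
        rw [hc0, he1]
        have heven : Even (m * (m - 2 * p) + m * p) := by
          have h4 : m * (m - 2 * p) + m * p = m * (m - p) := by
            rw [← Nat.mul_add]
            congr 1
            omega
          rw [h4]
          rcases Nat.even_or_odd m with he | ho
          · exact he.mul_right _
          · have hpodd : Odd p := by
              rcases hp.eq_two_or_odd' with rfl | h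
              · exfalso
                rw [Nat.odd_iff] at ho
                omega
              · exact h
            exact (Nat.Odd.sub_odd ho hpodd).mul_left m
        have keyF : (-1 : F) ^ (m * (m - 1) / 2)
            * ((1 : F) ^ m * ((-1) ^ m * 1) ^ (m - 2 * p) * ((-1) ^ m * T ^ p) ^ p) = d := by
          rw [one_pow, one_mul, mul_one, ← pow_mul, mul_pow ((-1 : F) ^ m), ← pow_mul]
          rw [show (-1 : F) ^ (m * (m - 2 * p)) * ((-1 : F) ^ (m * p) * (T ^ p) ^ p)
              = ((-1 : F) ^ (m * (m - 2 * p)) * (-1 : F) ^ (m * p)) * (T ^ p) ^ p from by ring]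
          rw [← pow_add, heven.neg_one_pow, one_mul, hT, ht1, ← mul_assoc, ← pow_add,
            (Even.add_self _).neg_one_pow, one_mul]
        exact congrArg (algebraMap F (AlgebraicClosure F)) keyF
    · -- p ∤ m (hence m > p) : f = X^m + (- X^(m-p) + C u * X^p + 1)
      have hmgtp : p < m := lt_of_le_of_ne hmp (fun h => hpm (h ▸ dvd_rfl))
      have hmF : ((m : ℕ) : F) ≠ 0 := by
        rw [Ne, CharP.cast_eq_zero_iff F p m]
        exact hpm
      have hAne : ((-1 : F) ^ (m * (m - 1) / 2) * ((m : ℕ) : F) ^ m) ≠ 0 :=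
        mul_ne_zero (pow_ne_zero _ (neg_ne_zero.mpr one_ne_zero)) (pow_ne_zero _ hmF)
      obtain ⟨t1, ht1⟩ := hsur ((((-1 : F) ^ (m * (m - 1) / 2) * ((m : ℕ) : F) ^ m))⁻¹ * d)
      obtain ⟨T, hT⟩ := hsur t1
      set u : F := (T - 1) ^ p with hu
      set g : F[X] := - X ^ (m - p) + C u * X ^ p + 1 with hgdef
      have hdegg : g.degree < (m : WithBot ℕ) := by
        rw [hgdef]
        apply lt_of_le_of_lt (degree_add_le _ _)
        apply max_lt
        · apply lt_of_le_of_lt (degree_add_le _ _)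
          apply max_lt
          · rw [degree_neg, degree_X_pow]
            exact_mod_cast (show m - p < m by omega)
          · exact lt_of_le_of_lt (degree_C_mul_X_pow_le p u)
              (by exact_mod_cast (show p < m by omega))
        · exact lt_of_le_of_lt degree_one_le
            (by exact_mod_cast (show (0 : ℕ) < m by omega))
      obtain ⟨hmon, hdeg⟩ := monic_natdeg_aux g m hdegg
      refine ⟨X ^ m + g, hmon, hdeg, ?_⟩
      have hm_p : ((m - p : ℕ) : F) = ((m : ℕ) : F) := by
        rw [Nat.cast_sub (show p ≤ m by omega), hpF]
        ring
      have hXp : ((X : F[X]) - 1) ^ p = X ^ p - 1 := by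
        have h := sub_pow_char (p := p) (X : F[X]) 1
        simpa using h
      have hder : derivative (X ^ m + g) = C ((m : ℕ) : F) * X ^ (m - p - 1) * (X - 1) ^ p := by
        rw [hgdef]
        rw [derivative_add, derivative_add, derivative_add, derivative_neg, derivative_X_pow,
          derivative_X_pow, derivative_C_mul, derivative_X_pow, derivative_one, hm_p, hpF]
        rw [hXp, (show m - 1 = m - p - 1 + p by omega)]
        simp only [C_0, C_1, zero_mul, mul_zero, one_mul, mul_one, add_zero, zero_add,
          sub_zero, zero_sub]
        ring
      rw [polyDisc_formula (X ^ m + g) hmon hdeg hm2 _ _ _ hder]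
      have hc0 : (X ^ m + g).coeff 0 = 1 := by
        rw [coeff_zero_eq_eval_zero, hgdef]
        simp only [eval_add, eval_neg, eval_pow, eval_X, eval_one, eval_mul, eval_C]
        rw [zero_pow (show m ≠ 0 by omega), zero_pow (show m - p ≠ 0 by omega),
          zero_pow (show p ≠ 0 by omega)]
        ring
      have he1 : (X ^ m + g).eval 1 = T ^ p := by
        rw [hgdef]
        simp only [eval_add, eval_neg, eval_pow, eval_X, eval_one, eval_mul, eval_C, one_pow]
        rw [hu, sub_pow_char]
        ring
      rw [hc0, he1]
      have heven : Even (m * (m - p - 1) + m * p) := by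
        have h4 : m * (m - p - 1) + m * p = m * (m - 1) := by
          rw [← Nat.mul_add]
          congr 1
          omega
        rw [h4, Nat.mul_comm]
        have h5 := Nat.even_mul_succ_self (m - 1)
        rwa [(show m - 1 + 1 = m by omega)] at h5
      have keyF : (-1 : F) ^ (m * (m - 1) / 2)
          * (((m : ℕ) : F) ^ m * ((-1) ^ m * 1) ^ (m - p - 1) * ((-1) ^ m * T ^ p) ^ p) = d := by
        rw [mul_one, ← pow_mul, mul_pow ((-1 : F) ^ m), ← pow_mul]
        rw [show ((m : ℕ) : F) ^ m * (-1 : F) ^ (m * (m - p - 1))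
            * ((-1 : F) ^ (m * p) * (T ^ p) ^ p)
            = ((-1 : F) ^ (m * (m - p - 1)) * (-1 : F) ^ (m * p))
              * (((m : ℕ) : F) ^ m * (T ^ p) ^ p) from by ring]
        rw [← pow_add, heven.neg_one_pow, one_mul, hT, ht1]
        rw [show (-1 : F) ^ (m * (m - 1) / 2) * (((m : ℕ) : F) ^ m
            * (((-1 : F) ^ (m * (m - 1) / 2) * ((m : ℕ) : F) ^ m)⁻¹ * d))
            = ((-1 : F) ^ (m * (m - 1) / 2) * ((m : ℕ) : F) ^ m)
              * ((-1 : F) ^ (m * (m - 1) / 2) * ((m : ℕ) : F) ^ m)⁻¹ * d from by ring]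
        rw [mul_inv_cancel₀ hAne, one_mul]
      exact congrArg (algebraMap F (AlgebraicClosure F)) keyF
end
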